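/- Let h ≥ 2 and 1 ≤ i ≤ h−1. (i) Expected number of visits: 𝔼_1[#{0 ≤ k ≤ T_h : S_k = i} | T_h < T_0] = 2i(h−i)/h and 𝔼_h[#{0 ≤ k ≤ T_0 : S_k = i} | T_0 < T_{h+1}] = 2i(h+1−i)/(h+1); in particular the excursion conditioned to have height h (the concatenation of the two conditioned legs) visits i an expected 2i(h−i)/h + 2i(h+1−i)/(h+1) times. (ii) Expected number of {i,i+1}-crossings: 𝔼_1[#{0 ≤ k < T_h : {S_k, S_{k+1}} = {i, i+1}} | T_h < T_0] = 2(h−i)(i+1)/h − 1 and 𝔼_h[#{0 ≤ k < T_0 : {S_k, S_{k+1}} = {i, i+1}} | T_0 < T_{h+1}] = 2(h+1−i)(i+1)/(h+1) − 1. -/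

import Mathlib

open MeasureTheory
open scoped ENNReal Classical

/-- `P` is the law (on trajectory space `ℕ → ℤ`) of simple random walk on `ℤ`
started at `j`: each admissible prefix of length `n` has probability `(1/2)^n`. -/
def IsSRWFrom (P : Measure (ℕ → ℤ)) (j : ℤ) : Prop :=
  IsProbabilityMeasure P ∧ ∀ (n : ℕ) (f : ℕ → ℤ),
    P {x | ∀ k ≤ n, x k = f k} =
      if f 0 = j ∧ ∀ k < n, f (k + 1) - f k = 1 ∨ f (k + 1) - f k = -1 then
        (1/2 : ℝ≥0∞) ^ n
      else 0

/-- The first hitting time `T_a` of `a ∈ ℤ`, as an element of `ℕ∞`. -/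
noncomputable def hitTime (a : ℤ) (x : ℕ → ℤ) : ℕ∞ :=
  sInf ((↑) '' {k : ℕ | x k = a})

/-- The number of visits to `i` up to time `T_a` (with values in `ℝ≥0∞`). -/
noncomputable def visitCount (i a : ℤ) (x : ℕ → ℤ) : ℝ≥0∞ :=
  ∑' k : ℕ, if (k : ℕ∞) ≤ hitTime a x ∧ x k = i then 1 else 0

/-- The number of `{i,i+1}`-crossings strictly before time `T_a`. -/
noncomputable def crossCount (i a : ℤ) (x : ℕ → ℤ) : ℝ≥0∞ :=
  ∑' k : ℕ, if (k : ℕ∞) < hitTime a x ∧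
      ((x k = i ∧ x (k + 1) = i + 1) ∨ (x k = i + 1 ∧ x (k + 1) = i)) then 1
    else 0

namespace SRW13

def stepB (b : Bool) : ℤ := if b then 1 else -1

def posi (j : ℤ) (s : ℕ → Bool) (k : ℕ) : ℤ := j + ∑ m ∈ Finset.range k, stepB (s m)

def ext {n : ℕ} (s : Fin n → Bool) : ℕ → Bool := fun k => if hk : k < n then s ⟨k, hk⟩ else false

def ok (h : ℕ) (j : ℤ) (n : ℕ) (s : ℕ → Bool) : Prop :=
  posi j s n = (h : ℤ) ∧ ∀ k < n, posi j s k ≠ 0 ∧ posi j s k ≠ (h : ℤ)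

@[simp] lemma stepB_true : stepB true = 1 := rfl
@[simp] lemma stepB_false : stepB false = -1 := rfl

@[simp] lemma posi_zero (j : ℤ) (s : ℕ → Bool) : posi j s 0 = j := by simp [posi]

lemma posi_succ (j : ℤ) (s : ℕ → Bool) (k : ℕ) :
    posi j s (k + 1) = posi j s k + stepB (s k) := by
  simp [posi, Finset.sum_range_succ, add_assoc]

lemma posi_shift (j : ℤ) (s : ℕ → Bool) (k : ℕ) :
    posi j s (k + 1) = posi (j + stepB (s 0)) (fun m => s (m + 1)) k := by
  simp [posi, Finset.sum_range_succ' (fun m => stepB (s m)) k]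
  ring

lemma ext_cons_succ {n : ℕ} (b : Bool) (s : Fin n → Bool) (k : ℕ) :
    ext (Fin.cons b s) (k + 1) = ext s k := by
  unfold ext
  by_cases hk : k < n
  · rw [dif_pos (by omega : k + 1 < n + 1), dif_pos hk]
    exact congrArg _ rfl
  · rw [dif_neg (by omega), dif_neg hk]

@[simp] lemma ext_cons_zero {n : ℕ} (b : Bool) (s : Fin n → Bool) :
    ext (Fin.cons b s) 0 = b := by
  unfold ext; rw [dif_pos (Nat.succ_pos n)]; rfl

lemma shift_ext_cons {n : ℕ} (b : Bool) (s : Fin n → Bool) :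
    (fun m => ext (Fin.cons b s) (m + 1)) = ext s := funext (ext_cons_succ b s)

lemma posi_ext_cons {n : ℕ} (j : ℤ) (b : Bool) (s : Fin n → Bool) (k : ℕ) :
    posi j (ext (Fin.cons b s)) (k + 1) = posi (j + stepB b) (ext s) k := by
  rw [posi_shift, shift_ext_cons, ext_cons_zero]

lemma ok_zero (h : ℕ) (j : ℤ) (s : ℕ → Bool) : ok h j 0 s ↔ j = (h : ℤ) := by
  simp [ok]

lemma ok_succ (h : ℕ) (j : ℤ) (n : ℕ) (b : Bool) (s : Fin n → Bool) :
    ok h j (n + 1) (ext (Fin.cons b s)) ↔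
      (j ≠ 0 ∧ j ≠ (h : ℤ)) ∧ ok h (j + stepB b) n (ext s) := by
  unfold ok
  constructor
  · rintro ⟨h1, h2⟩
    refine ⟨by simpa using h2 0 (Nat.succ_pos n), ?_, ?_⟩
    · rw [← posi_ext_cons j b s n]; exact h1
    · intro k hk
      rw [← posi_ext_cons j b s k]
      exact h2 (k + 1) (by omega)
  · rintro ⟨⟨h0, h0'⟩, h1, h2⟩
    refine ⟨by rw [posi_ext_cons]; exact h1, ?_⟩
    intro k hk
    cases k with
    | zero => simpa using ⟨h0, h0'⟩
    | succ m => rw [posi_ext_cons]; exact h2 m (by omega)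


lemma sum_cons {M : Type*} [AddCommMonoid M] {n : ℕ} (F : (Fin (n+1) → Bool) → M) :
    ∑ s : Fin (n+1) → Bool, F s =
      (∑ s : Fin n → Bool, F (Fin.cons true s)) + ∑ s : Fin n → Bool, F (Fin.cons false s) := by
  rw [← (Fin.consEquiv (fun _ => Bool)).sum_comp F, Fintype.sum_prod_type, Fintype.sum_bool]
  rfl

noncomputable def UA (h : ℕ) (j : ℤ) (n : ℕ) : ℝ :=
  ∑ s : Fin n → Bool, if ok h j n (ext s) then (2⁻¹ : ℝ) ^ n else 0

noncomputable def VA (h i : ℕ) (j : ℤ) (n : ℕ) : ℝ :=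
  ∑ s : Fin n → Bool, ∑ k ∈ Finset.range n,
    if ok h j n (ext s) ∧ posi j (ext s) k = (i : ℤ) then (2⁻¹ : ℝ) ^ n else 0

noncomputable def KA (h i : ℕ) (j : ℤ) (n : ℕ) : ℝ :=
  ∑ s : Fin n → Bool, ∑ k ∈ Finset.range n,
    if ok h j n (ext s) ∧
        ((posi j (ext s) k = (i : ℤ) ∧ posi j (ext s) (k+1) = (i : ℤ) + 1) ∨
         (posi j (ext s) k = (i : ℤ) + 1 ∧ posi j (ext s) (k+1) = (i : ℤ))) then
      (2⁻¹ : ℝ) ^ n else 0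

instance : Unique (Fin 0 → Bool) := ⟨⟨fun k => k.elim0⟩, fun s => funext fun k => k.elim0⟩

lemma UA_zero (h : ℕ) (j : ℤ) : UA h j 0 = if j = (h : ℤ) then 1 else 0 := by
  rw [UA, Fintype.sum_unique]
  simp [ok_zero]

lemma UA_nonneg (h : ℕ) (j : ℤ) (n : ℕ) : 0 ≤ UA h j n :=
  Finset.sum_nonneg fun s _ => by positivity

lemma UA_succ (h : ℕ) (j : ℤ) (n : ℕ) :
    UA h j (n + 1) = if j = 0 ∨ j = (h : ℤ) then 0 else
      2⁻¹ * (UA h (j + 1) n + UA h (j - 1) n) := by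
  rw [UA, sum_cons]
  by_cases hj : j = 0 ∨ j = (h : ℤ)
  · rw [if_pos hj]
    have : ¬ (j ≠ 0 ∧ j ≠ (h:ℤ)) := by tauto
    simp only [ok_succ, this, false_and, if_false]
    simp
  · rw [if_neg hj]
    push_neg at hj
    simp only [ok_succ, hj.1, hj.2, ne_eq, not_false_iff, true_and, stepB_true, stepB_false,
      pow_succ]
    rw [mul_add, UA, UA, Finset.mul_sum, Finset.mul_sum, show j + -1 = j - 1 from by ring]
    congr 1 <;> exact Finset.sum_congr rfl fun s _ => by rw [mul_ite, mul_zero, mul_comm]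

lemma VA_nonneg (h i : ℕ) (j : ℤ) (n : ℕ) : 0 ≤ VA h i j n :=
  Finset.sum_nonneg fun s _ => Finset.sum_nonneg fun k _ => by positivity

lemma KA_nonneg (h i : ℕ) (j : ℤ) (n : ℕ) : 0 ≤ KA h i j n :=
  Finset.sum_nonneg fun s _ => Finset.sum_nonneg fun k _ => by positivity

@[simp] lemma VA_zero (h i : ℕ) (j : ℤ) : VA h i j 0 = 0 := by simp [VA]

@[simp] lemma KA_zero (h i : ℕ) (j : ℤ) : KA h i j 0 = 0 := by simp [KA]

lemma ite_congr' {α : Sort*} {P Q : Prop} {dP : Decidable P} {dQ : Decidable Q} (h : P ↔ Q)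
    (a b : α) : (@ite α P dP a b) = @ite α Q dQ a b := by
  by_cases hp : P
  · rw [if_pos hp, if_pos (h.mp hp)]
  · rw [if_neg hp, if_neg (fun hq => hp (h.mpr hq))]

lemma ite_mul_half {P : Prop} {d : Decidable P} (w : ℝ) :
    (@ite ℝ P d (w * 2⁻¹) 0) = 2⁻¹ * (@ite ℝ P d w 0) := by
  by_cases hP : P
  · rw [if_pos hP, if_pos hP, mul_comm]
  · rw [if_neg hP, if_neg hP, mul_zero]

lemma VA_succ (h i : ℕ) (j : ℤ) (n : ℕ) :
    VA h i j (n + 1) = if j = 0 ∨ j = (h : ℤ) then 0 else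
      (if j = (i : ℤ) then 2⁻¹ * (UA h (j + 1) n + UA h (j - 1) n) else 0)
        + 2⁻¹ * (VA h i (j + 1) n + VA h i (j - 1) n) := by
  have key : ∀ (b : Bool) (s : Fin n → Bool),
      (∑ k ∈ Finset.range (n+1),
        if ok h j (n+1) (ext (Fin.cons b s)) ∧ posi j (ext (Fin.cons b s)) k = (i:ℤ)
          then (2⁻¹:ℝ)^(n+1) else 0)
      = (∑ k ∈ Finset.range n,
          if ((j ≠ 0 ∧ j ≠ (h:ℤ)) ∧ ok h (j + stepB b) n (ext s)) ∧
              posi (j + stepB b) (ext s) k = (i:ℤ) then (2⁻¹:ℝ)^(n+1) else 0)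
        + (if ((j ≠ 0 ∧ j ≠ (h:ℤ)) ∧ ok h (j + stepB b) n (ext s)) ∧ j = (i:ℤ)
            then (2⁻¹:ℝ)^(n+1) else 0) := by
    intro b s
    rw [Finset.sum_range_succ']
    congr 1
    · exact Finset.sum_congr rfl fun k _ => by
        rw [ok_succ, posi_ext_cons]; exact ite_congr' Iff.rfl _ _
    · rw [ok_succ, posi_zero]; exact ite_congr' Iff.rfl _ _
  rw [VA, sum_cons]
  simp only [key]
  by_cases hj : j = 0 ∨ j = (h:ℤ)
  · have hne : ¬ (j ≠ 0 ∧ j ≠ (h:ℤ)) := by tauto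
    simp [hne, hj]
  · push_neg at hj
    rw [if_neg (by tauto)]
    simp only [hj.1, hj.2, ne_eq, not_false_iff, true_and, stepB_true, stepB_false, pow_succ,
      show j + -1 = j - 1 from by ring]
    rw [Finset.sum_add_distrib, Finset.sum_add_distrib]
    have hA : ∀ j' : ℤ, (∑ s : Fin n → Bool, ∑ k ∈ Finset.range n,
        if ok h j' n (ext s) ∧ posi j' (ext s) k = (i:ℤ) then (2⁻¹:ℝ)^n * 2⁻¹ else 0)
        = 2⁻¹ * VA h i j' n := by
      intro j'
      rw [VA, Finset.mul_sum]
      refine Finset.sum_congr rfl fun s _ => ?_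
      rw [Finset.mul_sum]
      exact Finset.sum_congr rfl fun k _ => ite_mul_half _
    have hB : ∀ j' : ℤ, (∑ s : Fin n → Bool,
        if ok h j' n (ext s) ∧ j = (i:ℤ) then (2⁻¹:ℝ)^n * 2⁻¹ else 0)
        = if j = (i:ℤ) then 2⁻¹ * UA h j' n else 0 := by
      intro j'
      by_cases hji : j = (i:ℤ)
      · simp only [hji, and_true, if_true, UA, Finset.mul_sum]
        exact Finset.sum_congr rfl fun s _ => ite_mul_half _
      · simp [hji]
    rw [hA, hA, hB, hB]
    by_cases hji : j = (i:ℤ) <;> simp only [hji, if_true, if_false] <;> ring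

lemma KA_succ (h i : ℕ) (j : ℤ) (n : ℕ) :
    KA h i j (n + 1) = if j = 0 ∨ j = (h : ℤ) then 0 else
      2⁻¹ * ((if j = (i : ℤ) then UA h (j + 1) n else 0)
          + (if j = (i : ℤ) + 1 then UA h (j - 1) n else 0))
        + 2⁻¹ * (KA h i (j + 1) n + KA h i (j - 1) n) := by
  have key : ∀ (b : Bool) (s : Fin n → Bool),
      (∑ k ∈ Finset.range (n+1),
        if ok h j (n+1) (ext (Fin.cons b s)) ∧
            ((posi j (ext (Fin.cons b s)) k = (i:ℤ) ∧ posi j (ext (Fin.cons b s)) (k+1) = (i:ℤ)+1) ∨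
             (posi j (ext (Fin.cons b s)) k = (i:ℤ)+1 ∧ posi j (ext (Fin.cons b s)) (k+1) = (i:ℤ)))
          then (2⁻¹:ℝ)^(n+1) else 0)
      = (∑ k ∈ Finset.range n,
          if ((j ≠ 0 ∧ j ≠ (h:ℤ)) ∧ ok h (j + stepB b) n (ext s)) ∧
              ((posi (j + stepB b) (ext s) k = (i:ℤ) ∧ posi (j + stepB b) (ext s) (k+1) = (i:ℤ)+1) ∨
               (posi (j + stepB b) (ext s) k = (i:ℤ)+1 ∧ posi (j + stepB b) (ext s) (k+1) = (i:ℤ)))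
            then (2⁻¹:ℝ)^(n+1) else 0)
        + (if ((j ≠ 0 ∧ j ≠ (h:ℤ)) ∧ ok h (j + stepB b) n (ext s)) ∧
              ((j = (i:ℤ) ∧ j + stepB b = (i:ℤ)+1) ∨ (j = (i:ℤ)+1 ∧ j + stepB b = (i:ℤ)))
            then (2⁻¹:ℝ)^(n+1) else 0) := by
    intro b s
    rw [Finset.sum_range_succ']
    congr 1
    · exact Finset.sum_congr rfl fun k _ => by
        rw [ok_succ, posi_ext_cons, posi_ext_cons]; exact ite_congr' Iff.rfl _ _
    · rw [ok_succ, posi_zero, show (0:ℕ)+1 = 1 from rfl,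
        show posi j (ext (Fin.cons b s)) 1 = posi (j + stepB b) (ext s) 0 from posi_ext_cons j b s 0,
        posi_zero]
      exact ite_congr' Iff.rfl _ _
  rw [KA, sum_cons]
  simp only [key]
  by_cases hj : j = 0 ∨ j = (h:ℤ)
  · have hne : ¬ (j ≠ 0 ∧ j ≠ (h:ℤ)) := by tauto
    simp [hne, hj]
  · push_neg at hj
    rw [if_neg (by tauto)]
    have ct : ((j = (i:ℤ) ∧ j + 1 = (i:ℤ)+1) ∨ (j = (i:ℤ)+1 ∧ j + 1 = (i:ℤ)))
        ↔ j = (i:ℤ) := by omega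
    have cf : ((j = (i:ℤ) ∧ j - 1 = (i:ℤ)+1) ∨ (j = (i:ℤ)+1 ∧ j - 1 = (i:ℤ)))
        ↔ j = (i:ℤ)+1 := by omega
    simp only [hj.1, hj.2, ne_eq, not_false_iff, true_and, stepB_true, stepB_false, pow_succ,
      show j + -1 = j - 1 from by ring, ct, cf]
    rw [Finset.sum_add_distrib, Finset.sum_add_distrib]
    have hA : ∀ j' : ℤ, (∑ s : Fin n → Bool, ∑ k ∈ Finset.range n,
        if ok h j' n (ext s) ∧
            ((posi j' (ext s) k = (i:ℤ) ∧ posi j' (ext s) (k+1) = (i:ℤ)+1) ∨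
             (posi j' (ext s) k = (i:ℤ)+1 ∧ posi j' (ext s) (k+1) = (i:ℤ)))
          then (2⁻¹:ℝ)^n * 2⁻¹ else 0)
        = 2⁻¹ * KA h i j' n := by
      intro j'
      rw [KA, Finset.mul_sum]
      refine Finset.sum_congr rfl fun s _ => ?_
      rw [Finset.mul_sum]
      exact Finset.sum_congr rfl fun k _ => ite_mul_half _
    rw [hA, hA]
    have ne1 : ¬((i:ℤ) = (i:ℤ)+1) := by omega
    have ne2 : ¬((i:ℤ)+1 = (i:ℤ)) := by omega
    by_cases h1 : j = (i:ℤ) <;> by_cases h2 : j = (i:ℤ)+1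
    · omega
    all_goals
      simp only [h1, h2, eq_self_iff_true, and_true, and_false, if_true, if_false, ne1, ne2,
        iff_false, Finset.sum_const_zero, ite_mul_half, ← Finset.mul_sum, UA]
    all_goals ring


lemma UA_boundary_left (h : ℕ) (hh : 1 ≤ h) : ∀ n, UA h 0 n = 0 := by
  intro n
  cases n with
  | zero => rw [UA_zero, if_neg (by exact_mod_cast by omega : (0:ℤ) ≠ (h:ℤ))]
  | succ m => rw [UA_succ, if_pos (Or.inl rfl)]

lemma UA_boundary_right (h : ℕ) (n : ℕ) : UA h (h:ℤ) (n+1) = 0 := by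
  rw [UA_succ, if_pos (Or.inr rfl)]

lemma VA_boundary_left (h i : ℕ) (n : ℕ) : VA h i 0 n = 0 := by
  cases n with
  | zero => simp
  | succ m => rw [VA_succ, if_pos (Or.inl rfl)]

lemma VA_boundary_right (h i : ℕ) (n : ℕ) : VA h i (h:ℤ) n = 0 := by
  cases n with
  | zero => simp
  | succ m => rw [VA_succ, if_pos (Or.inr rfl)]

lemma KA_boundary_left (h i : ℕ) (n : ℕ) : KA h i 0 n = 0 := by
  cases n with
  | zero => simp
  | succ m => rw [KA_succ, if_pos (Or.inl rfl)]

lemma KA_boundary_right (h i : ℕ) (n : ℕ) : KA h i (h:ℤ) n = 0 := by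
  cases n with
  | zero => simp
  | succ m => rw [KA_succ, if_pos (Or.inr rfl)]

lemma U_partial_le (h : ℕ) (hh : 1 ≤ h) :
    ∀ m : ℕ, ∀ j : ℤ, 0 ≤ j → j ≤ (h:ℤ) → ∑ n ∈ Finset.range m, UA h j n ≤ 1 := by
  intro m
  induction m with
  | zero => intro j _ _; simp
  | succ m ih =>
    intro j h0 hj
    rw [Finset.sum_range_succ']
    by_cases hb : j = 0 ∨ j = (h:ℤ)
    · rcases hb with hb | hb
      · subst hb
        simp only [UA_boundary_left h hh, Finset.sum_const_zero, add_zero]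
        norm_num
      · subst hb
        simp only [UA_boundary_right, Finset.sum_const_zero, UA_zero, if_pos rfl]
        norm_num
    · push_neg at hb
      have e : ∀ n, UA h j (n+1) = 2⁻¹ * (UA h (j+1) n + UA h (j-1) n) := fun n => by
        rw [UA_succ, if_neg (by tauto)]
      simp only [e]
      rw [UA_zero, if_neg hb.2]
      have := ih (j+1) (by omega) (by omega)
      have := ih (j-1) (by omega) (by omega)
      rw [← Finset.mul_sum, Finset.sum_add_distrib]
      nlinarith [ih (j+1) (by omega) (by omega), ih (j-1) (by omega) (by omega)]

lemma summable_UA (h : ℕ) (hh : 1 ≤ h) (j : ℤ) (h0 : 0 ≤ j) (hj : j ≤ (h:ℤ)) :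
    Summable (UA h j) :=
  summable_of_sum_range_le (fun n => UA_nonneg h j n) (fun m => U_partial_le h hh m j h0 hj)

noncomputable def Useries (h : ℕ) (j : ℤ) : ℝ := ∑' n, UA h j n

lemma Useries_nonneg (h : ℕ) (j : ℤ) : 0 ≤ Useries h j :=
  tsum_nonneg (fun n => UA_nonneg h j n)

lemma Useries_zero (h : ℕ) (hh : 1 ≤ h) : Useries h 0 = 0 := by
  unfold Useries
  rw [show (fun n => UA h 0 n) = fun _ => (0:ℝ) from funext (UA_boundary_left h hh)]
  exact tsum_zero

lemma Useries_top (h : ℕ) : Useries h (h:ℤ) = 1 := by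
  unfold Useries
  rw [tsum_eq_single 0 (fun n hn => by
    cases n with
    | zero => exact absurd rfl hn
    | succ m => exact UA_boundary_right h m)]
  rw [UA_zero, if_pos rfl]

lemma Useries_harmonic (h : ℕ) (hh : 1 ≤ h) (j : ℤ) (h0 : 0 < j) (hj : j < (h:ℤ)) :
    Useries h j = 2⁻¹ * (Useries h (j+1) + Useries h (j-1)) := by
  unfold Useries
  rw [Summable.tsum_eq_zero_add (summable_UA h hh j (by omega) (by omega))]
  rw [UA_zero, if_neg (by omega)]
  have e : ∀ n, UA h j (n+1) = 2⁻¹ * (UA h (j+1) n + UA h (j-1) n) := fun n => by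
    rw [UA_succ, if_neg (by omega)]
  simp only [e]
  rw [tsum_mul_left, Summable.tsum_add (summable_UA h hh (j+1) (by omega) (by omega))
    (summable_UA h hh (j-1) (by omega) (by omega)), zero_add]


lemma phi_identity (h : ℕ) (j : ℤ) :
    (((j:ℝ)+1) * (2*(h:ℝ) - (j+1)) + ((j:ℝ)-1) * (2*(h:ℝ) - (j-1)))
      = 2 * ((j:ℝ) * (2*(h:ℝ) - j)) - 2 := by ring

lemma V_partial_le (h i : ℕ) (hh : 1 ≤ h) :
    ∀ m : ℕ, ∀ j : ℤ, 0 ≤ j → j ≤ (h:ℤ) →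
      ∑ n ∈ Finset.range m, VA h i j n ≤ (j:ℝ) * (2*(h:ℝ) - j) := by
  intro m
  induction m with
  | zero =>
    intro j h0 hj
    simp only [Finset.range_zero, Finset.sum_empty]
    have : (0:ℝ) ≤ (j:ℝ) ∧ (j:ℝ) ≤ (h:ℝ) := by constructor <;> exact_mod_cast (by omega)
    nlinarith [this.1, this.2, (by positivity : (0:ℝ) ≤ (h:ℝ))]
  | succ m ih =>
    intro j h0 hj
    rw [Finset.sum_range_succ']
    by_cases hb : j = 0 ∨ j = (h:ℤ)
    · rcases hb with hb | hb <;> subst hb <;>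
        simp only [VA_boundary_left, VA_boundary_right, Finset.sum_const_zero, add_zero] <;>
        push_cast <;> nlinarith [(by exact_mod_cast hh : (1:ℝ) ≤ (h:ℝ))]
    · push_neg at hb
      have e : ∀ n, VA h i j (n+1) =
          (if j = (i:ℤ) then 2⁻¹ * (UA h (j+1) n + UA h (j-1) n) else 0)
            + 2⁻¹ * (VA h i (j+1) n + VA h i (j-1) n) := fun n => by
        rw [VA_succ, if_neg (by tauto)]
      simp only [e]
      rw [VA_zero, add_zero, Finset.sum_add_distrib]
      have hV1 := ih (j+1) (by omega) (by omega)
      have hV2 := ih (j-1) (by omega) (by omega)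
      have hU1 := U_partial_le h hh m (j+1) (by omega) (by omega)
      have hU2 := U_partial_le h hh m (j-1) (by omega) (by omega)
      have hUn1 : (0:ℝ) ≤ ∑ n ∈ Finset.range m, UA h (j+1) n :=
        Finset.sum_nonneg fun n _ => UA_nonneg _ _ _
      have hUn2 : (0:ℝ) ≤ ∑ n ∈ Finset.range m, UA h (j-1) n :=
        Finset.sum_nonneg fun n _ => UA_nonneg _ _ _
      have hsrc : (∑ n ∈ Finset.range m,
          if j = (i:ℤ) then 2⁻¹ * (UA h (j+1) n + UA h (j-1) n) else 0) ≤ 1 := by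
        by_cases hji : j = (i:ℤ)
        · simp only [hji, if_true, ← Finset.mul_sum, Finset.sum_add_distrib]
          simp only [hji] at hU1 hU2 hUn1 hUn2
          nlinarith
        · simp [hji]
      have hrest : (∑ n ∈ Finset.range m, 2⁻¹ * (VA h i (j+1) n + VA h i (j-1) n))
          ≤ (j:ℝ) * (2*(h:ℝ) - j) - 1 := by
        rw [← Finset.mul_sum, Finset.sum_add_distrib]
        have : ((j:ℝ)+1) * (2*(h:ℝ) - ((j:ℝ)+1)) + ((j:ℝ)-1) * (2*(h:ℝ) - ((j:ℝ)-1))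
            = 2 * ((j:ℝ) * (2*(h:ℝ) - (j:ℝ))) - 2 := by ring
        push_cast at hV1 hV2
        nlinarith
      linarith

lemma summable_VA (h i : ℕ) (hh : 1 ≤ h) (j : ℤ) (h0 : 0 ≤ j) (hj : j ≤ (h:ℤ)) :
    Summable (VA h i j) :=
  summable_of_sum_range_le (fun n => VA_nonneg h i j n)
    (fun m => V_partial_le h i hh m j h0 hj)

noncomputable def Vseries (h i : ℕ) (j : ℤ) : ℝ := ∑' n, VA h i j n

lemma Vseries_zero (h i : ℕ) : Vseries h i 0 = 0 := by
  unfold Vseries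
  rw [show (fun n => VA h i 0 n) = fun _ => (0:ℝ) from funext (VA_boundary_left h i)]
  exact tsum_zero

lemma Vseries_top (h i : ℕ) : Vseries h i (h:ℤ) = 0 := by
  unfold Vseries
  rw [show (fun n => VA h i (h:ℤ) n) = fun _ => (0:ℝ) from funext (VA_boundary_right h i)]
  exact tsum_zero

lemma Vseries_harmonic (h i : ℕ) (hh : 1 ≤ h) (j : ℤ) (h0 : 0 < j) (hj : j < (h:ℤ)) :
    Vseries h i j = (if j = (i:ℤ) then 2⁻¹ * (Useries h (j+1) + Useries h (j-1)) else 0)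
      + 2⁻¹ * (Vseries h i (j+1) + Vseries h i (j-1)) := by
  unfold Vseries
  rw [Summable.tsum_eq_zero_add (summable_VA h i hh j (by omega) (by omega))]
  rw [VA_zero, zero_add]
  have e : ∀ n, VA h i j (n+1) =
      (if j = (i:ℤ) then 2⁻¹ * (UA h (j+1) n + UA h (j-1) n) else 0)
        + 2⁻¹ * (VA h i (j+1) n + VA h i (j-1) n) := fun n => by
    rw [VA_succ, if_neg (by omega)]
  simp only [e]
  have sU : Summable (fun n => (if j = (i:ℤ) then 2⁻¹ * (UA h (j+1) n + UA h (j-1) n) else 0)) := by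
    by_cases hji : j = (i:ℤ)
    · simp only [hji, if_true]
      exact (((summable_UA h hh ((i:ℤ)+1) (by omega) (by omega)).add
        (summable_UA h hh ((i:ℤ)-1) (by omega) (by omega))).mul_left 2⁻¹)
    · simp only [hji, if_false]; exact summable_zero
  have sV : Summable (fun n => 2⁻¹ * (VA h i (j+1) n + VA h i (j-1) n)) :=
    ((summable_VA h i hh (j+1) (by omega) (by omega)).add
      (summable_VA h i hh (j-1) (by omega) (by omega))).mul_left 2⁻¹
  rw [Summable.tsum_add sU sV]
  congr 1
  · by_cases hji : j = (i:ℤ)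
    · simp only [hji, if_true]
      rw [tsum_mul_left, Summable.tsum_add (summable_UA h hh ((i:ℤ)+1) (by omega) (by omega))
        (summable_UA h hh ((i:ℤ)-1) (by omega) (by omega))]
      rfl
    · simp only [hji, if_false]; exact tsum_zero
  · rw [tsum_mul_left, Summable.tsum_add (summable_VA h i hh (j+1) (by omega) (by omega))
      (summable_VA h i hh (j-1) (by omega) (by omega))]


lemma K_partial_le (h i : ℕ) (hh : 1 ≤ h) :
    ∀ m : ℕ, ∀ j : ℤ, 0 ≤ j → j ≤ (h:ℤ) →
      ∑ n ∈ Finset.range m, KA h i j n ≤ (j:ℝ) * (2*(h:ℝ) - j) := by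
  intro m
  induction m with
  | zero =>
    intro j h0 hj
    simp only [Finset.range_zero, Finset.sum_empty]
    have : (0:ℝ) ≤ (j:ℝ) ∧ (j:ℝ) ≤ (h:ℝ) := by constructor <;> exact_mod_cast (by omega)
    nlinarith [this.1, this.2, (by positivity : (0:ℝ) ≤ (h:ℝ))]
  | succ m ih =>
    intro j h0 hj
    rw [Finset.sum_range_succ']
    by_cases hb : j = 0 ∨ j = (h:ℤ)
    · rcases hb with hb | hb <;> subst hb <;>
        simp only [KA_boundary_left, KA_boundary_right, Finset.sum_const_zero, add_zero] <;>
        push_cast <;> nlinarith [(by exact_mod_cast hh : (1:ℝ) ≤ (h:ℝ))]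
    · push_neg at hb
      have e : ∀ n, KA h i j (n+1) =
          2⁻¹ * ((if j = (i:ℤ) then UA h (j+1) n else 0)
              + (if j = (i:ℤ)+1 then UA h (j-1) n else 0))
            + 2⁻¹ * (KA h i (j+1) n + KA h i (j-1) n) := fun n => by
        rw [KA_succ, if_neg (by tauto)]
      simp only [e]
      rw [KA_zero, add_zero, Finset.sum_add_distrib]
      have hK1 := ih (j+1) (by omega) (by omega)
      have hK2 := ih (j-1) (by omega) (by omega)
      push_cast at hK1 hK2
      have hU1 := U_partial_le h hh m (j+1) (by omega) (by omega)
      have hU2 := U_partial_le h hh m (j-1) (by omega) (by omega)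
      have hUn1 : (0:ℝ) ≤ ∑ n ∈ Finset.range m, UA h (j+1) n :=
        Finset.sum_nonneg fun n _ => UA_nonneg _ _ _
      have hUn2 : (0:ℝ) ≤ ∑ n ∈ Finset.range m, UA h (j-1) n :=
        Finset.sum_nonneg fun n _ => UA_nonneg _ _ _
      have hsrc : (∑ n ∈ Finset.range m,
          2⁻¹ * ((if j = (i:ℤ) then UA h (j+1) n else 0)
            + (if j = (i:ℤ)+1 then UA h (j-1) n else 0))) ≤ 1 := by
        rw [← Finset.mul_sum, Finset.sum_add_distrib]
        have b1 : (∑ x ∈ Finset.range m, if j = (i:ℤ) then UA h (j+1) x else 0) ≤ 1 := by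
          by_cases h1 : j = (i:ℤ)
          · simp only [if_pos h1]; exact hU1
          · simp [h1]
        have b2 : (∑ x ∈ Finset.range m, if j = (i:ℤ)+1 then UA h (j-1) x else 0) ≤ 1 := by
          by_cases h2 : j = (i:ℤ)+1
          · simp only [if_pos h2]; exact hU2
          · simp [h2]
        have n1 : (0:ℝ) ≤ ∑ x ∈ Finset.range m, if j = (i:ℤ) then UA h (j+1) x else 0 :=
          Finset.sum_nonneg fun x _ => by
            by_cases hc : j = (i:ℤ)
            · simpa [hc] using UA_nonneg h (j+1) x
            · simp [hc]
        have n2 : (0:ℝ) ≤ ∑ x ∈ Finset.range m, if j = (i:ℤ)+1 then UA h (j-1) x else 0 :=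
          Finset.sum_nonneg fun x _ => by
            by_cases hc : j = (i:ℤ)+1
            · simpa [hc] using UA_nonneg h (j-1) x
            · simp [hc]
        nlinarith
      have hrest : (∑ n ∈ Finset.range m, 2⁻¹ * (KA h i (j+1) n + KA h i (j-1) n))
          ≤ (j:ℝ) * (2*(h:ℝ) - j) - 1 := by
        rw [← Finset.mul_sum, Finset.sum_add_distrib]
        nlinarith
      linarith

lemma summable_KA (h i : ℕ) (hh : 1 ≤ h) (j : ℤ) (h0 : 0 ≤ j) (hj : j ≤ (h:ℤ)) :
    Summable (KA h i j) :=
  summable_of_sum_range_le (fun n => KA_nonneg h i j n)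
    (fun m => K_partial_le h i hh m j h0 hj)

noncomputable def Kseries (h i : ℕ) (j : ℤ) : ℝ := ∑' n, KA h i j n

lemma Kseries_zero (h i : ℕ) : Kseries h i 0 = 0 := by
  unfold Kseries
  rw [show (fun n => KA h i 0 n) = fun _ => (0:ℝ) from funext (KA_boundary_left h i)]
  exact tsum_zero

lemma Kseries_top (h i : ℕ) : Kseries h i (h:ℤ) = 0 := by
  unfold Kseries
  rw [show (fun n => KA h i (h:ℤ) n) = fun _ => (0:ℝ) from funext (KA_boundary_right h i)]
  exact tsum_zero

lemma Kseries_harmonic (h i : ℕ) (hh : 1 ≤ h) (j : ℤ) (h0 : 0 < j) (hj : j < (h:ℤ)) :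
    Kseries h i j = 2⁻¹ * ((if j = (i:ℤ) then Useries h (j+1) else 0)
        + (if j = (i:ℤ)+1 then Useries h (j-1) else 0))
      + 2⁻¹ * (Kseries h i (j+1) + Kseries h i (j-1)) := by
  unfold Kseries
  rw [Summable.tsum_eq_zero_add (summable_KA h i hh j (by omega) (by omega))]
  rw [KA_zero, zero_add]
  have e : ∀ n, KA h i j (n+1) =
      2⁻¹ * ((if j = (i:ℤ) then UA h (j+1) n else 0)
          + (if j = (i:ℤ)+1 then UA h (j-1) n else 0))
        + 2⁻¹ * (KA h i (j+1) n + KA h i (j-1) n) := fun n => by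
    rw [KA_succ, if_neg (by omega)]
  simp only [e]
  have sU1 : Summable (fun n => (if j = (i:ℤ) then UA h (j+1) n else 0)) := by
    by_cases h1 : j = (i:ℤ) <;> simp only [h1, if_true, if_false]
    · exact summable_UA h hh _ (by omega) (by omega)
    · exact summable_zero
  have sU2 : Summable (fun n => (if j = (i:ℤ)+1 then UA h (j-1) n else 0)) := by
    by_cases h2 : j = (i:ℤ)+1 <;> simp only [h2, if_true, if_false]
    · exact summable_UA h hh _ (by omega) (by omega)
    · exact summable_zero
  have sK : Summable (fun n => 2⁻¹ * (KA h i (j+1) n + KA h i (j-1) n)) :=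
    ((summable_KA h i hh (j+1) (by omega) (by omega)).add
      (summable_KA h i hh (j-1) (by omega) (by omega))).mul_left 2⁻¹
  rw [Summable.tsum_add (((sU1.add sU2)).mul_left 2⁻¹) sK]
  congr 1
  · rw [tsum_mul_left, Summable.tsum_add sU1 sU2]
    have e1 : (∑' (b:ℕ), if j = (i:ℤ) then UA h (j+1) b else 0)
        = (if j = (i:ℤ) then Useries h (j+1) else 0) := by
      by_cases h1 : j = (i:ℤ)
      · simp only [if_pos h1]; rfl
      · simp only [if_neg h1]; exact tsum_zero
    have e2 : (∑' (b:ℕ), if j = (i:ℤ)+1 then UA h (j-1) b else 0)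
        = (if j = (i:ℤ)+1 then Useries h (j-1) else 0) := by
      by_cases h2 : j = (i:ℤ)+1
      · simp only [if_pos h2]; rfl
      · simp only [if_neg h2]; exact tsum_zero
    rw [e1, e2]
  · rw [tsum_mul_left, Summable.tsum_add (summable_KA h i hh (j+1) (by omega) (by omega))
      (summable_KA h i hh (j-1) (by omega) (by omega))]


lemma diff_formula (g s : ℤ → ℝ) (h : ℕ)
    (hrec : ∀ j : ℤ, 0 < j → j < (h:ℤ) → g j = s j + 2⁻¹ * (g (j+1) + g (j-1)))
    (h0 : g 0 = 0) :
    ∀ m : ℕ, m < h → g ((m:ℤ)+1) - g (m:ℤ) = g 1 - 2 * ∑ t ∈ Finset.Icc 1 m, s (t:ℤ) := by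
  intro m
  induction m with
  | zero => intro _; simp [h0]
  | succ k ih =>
    intro hm
    have hk := ih (by omega)
    have hr := hrec ((k:ℤ)+1) (by omega) (by exact_mod_cast (by omega : (k:ℤ)+1 < (h:ℤ)))
    have e1 : (k:ℤ)+1+1 = ((k:ℤ)+1)+1 := by ring
    have e2 : (k:ℤ)+1-1 = (k:ℤ) := by ring
    rw [e2] at hr
    have hs : ∑ t ∈ Finset.Icc 1 (k+1), s (t:ℤ)
        = (∑ t ∈ Finset.Icc 1 k, s (t:ℤ)) + s ((k:ℤ)+1) := by
      rw [Finset.sum_Icc_succ_top (by omega : 1 ≤ k+1)]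
      push_cast
      ring
    push_cast
    push_cast at hk
    rw [hs]
    linarith

lemma swap_tri (s : ℤ → ℝ) : ∀ N : ℕ,
    (∑ m ∈ Finset.range N, ∑ t ∈ Finset.Icc 1 m, s (t:ℤ))
      = ∑ t ∈ Finset.Icc 1 N, ((N:ℝ) - (t:ℝ)) * s (t:ℤ) := by
  intro N
  induction N with
  | zero => simp
  | succ N ih =>
    rw [Finset.sum_range_succ, ih, Finset.sum_Icc_succ_top (by omega : 1 ≤ N+1)]
    push_cast
    rw [sub_self, zero_mul, add_zero]
    rw [← Finset.sum_add_distrib]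
    refine Finset.sum_congr rfl fun t _ => ?_
    ring

lemma solve_source (g s : ℤ → ℝ) (h : ℕ)
    (hrec : ∀ j : ℤ, 0 < j → j < (h:ℤ) → g j = s j + 2⁻¹ * (g (j+1) + g (j-1)))
    (h0 : g 0 = 0) :
    g (h:ℤ) = (h:ℝ) * g 1 - 2 * ∑ t ∈ Finset.Icc 1 h, ((h:ℝ) - (t:ℝ)) * s (t:ℤ) := by
  have tel : (∑ m ∈ Finset.range h, (g ((m:ℤ)+1) - g (m:ℤ))) = g (h:ℤ) - g 0 := by
    have := Finset.sum_range_sub (fun m : ℕ => g (m:ℤ)) h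
    simp only [Nat.cast_zero] at this
    rw [← this]
    refine Finset.sum_congr rfl fun m _ => ?_
    push_cast
    ring_nf
  have expand : (∑ m ∈ Finset.range h, (g ((m:ℤ)+1) - g (m:ℤ)))
      = (h:ℝ) * g 1 - 2 * ∑ m ∈ Finset.range h, ∑ t ∈ Finset.Icc 1 m, s (t:ℤ) := by
    rw [Finset.sum_congr rfl (fun m hm => diff_formula g s h hrec h0 m (Finset.mem_range.mp hm))]
    rw [Finset.sum_sub_distrib, Finset.sum_const, Finset.card_range, ← Finset.mul_sum]
    push_cast
    ring
  rw [h0, sub_zero] at tel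
  rw [← tel, expand, swap_tri]

lemma lin_of_harmonic (g : ℤ → ℝ) (h : ℕ)
    (hrec : ∀ j : ℤ, 0 < j → j < (h:ℤ) → g j = 2⁻¹ * (g (j+1) + g (j-1)))
    (h0 : g 0 = 0) :
    ∀ m : ℕ, m ≤ h → g (m:ℤ) = (m:ℝ) * g 1 := by
  have hd := diff_formula g (fun _ => 0) h (fun j a b => by rw [hrec j a b, zero_add]) h0
  simp only [Finset.sum_const_zero, mul_zero, sub_zero] at hd
  intro m
  induction m with
  | zero => intro _; simpa using h0
  | succ k ih =>
    intro hm
    have hk := ih (by omega)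
    have := hd k (by omega)
    push_cast
    push_cast at hk this
    linarith

lemma Useries_eval (h : ℕ) (hh : 1 ≤ h) (m : ℕ) (hm : m ≤ h) :
    Useries h (m:ℤ) = (m:ℝ) / (h:ℝ) := by
  have hl := lin_of_harmonic (Useries h) h
    (fun j a b => by rw [Useries_harmonic h hh j a b]) (Useries_zero h hh)
  have htop := hl h (le_refl h)
  rw [Useries_top] at htop
  have hne : (h:ℝ) ≠ 0 := Nat.cast_ne_zero.mpr (by omega)
  have hU1 : Useries h 1 = 1 / (h:ℝ) := by
    rw [eq_div_iff hne]
    linarith [htop]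
  rw [hl m hm, hU1]
  ring


lemma Vseries_one (h i : ℕ) (hh : 1 ≤ h) (hi1 : 1 ≤ i) (hi2 : i + 1 ≤ h) :
    Vseries h i 1 = 2 * (i:ℝ) * ((h:ℝ) - (i:ℝ)) / (h:ℝ)^2 := by
  set s : ℤ → ℝ := fun j => if j = (i:ℤ) then 2⁻¹ * (Useries h (j+1) + Useries h (j-1)) else 0
    with hs
  have hsolve := solve_source (Vseries h i) s h
    (fun j a b => by rw [Vseries_harmonic h i hh j a b]) (Vseries_zero h i)
  rw [Vseries_top] at hsolve
  have hsum : (∑ t ∈ Finset.Icc 1 h, ((h:ℝ) - (t:ℝ)) * s (t:ℤ))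
      = ((h:ℝ) - (i:ℝ)) * ((i:ℝ) / (h:ℝ)) := by
    rw [Finset.sum_eq_single_of_mem i (Finset.mem_Icc.mpr ⟨hi1, by omega⟩)]
    · have hsi : s (i:ℤ) = (i:ℝ) / (h:ℝ) := by
        rw [hs]
        simp only [if_pos rfl, ↓reduceIte]
        have e1 : (i:ℤ)+1 = ((i+1 : ℕ):ℤ) := by push_cast; ring
        have e2 : (i:ℤ)-1 = ((i-1 : ℕ):ℤ) := by push_cast [hi1]; ring
        rw [e1, e2, Useries_eval h hh (i+1) (by omega), Useries_eval h hh (i-1) (by omega)]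
        have hne : (h:ℝ) ≠ 0 := Nat.cast_ne_zero.mpr (by omega)
        have : ((i-1:ℕ):ℝ) = (i:ℝ) - 1 := by push_cast [hi1]; ring
        rw [this]
        field_simp
        push_cast
        ring
      rw [hsi]
    · intro t ht hti
      have : ((t:ℤ)) ≠ (i:ℤ) := by exact_mod_cast hti
      rw [hs]
      simp only [if_neg this, mul_zero]
  rw [hsum] at hsolve
  have hne : (h:ℝ) ≠ 0 := Nat.cast_ne_zero.mpr (by omega)
  field_simp at hsolve ⊢
  linarith

lemma Kseries_one (h i : ℕ) (hh : 1 ≤ h) (hi1 : 1 ≤ i) (hi2 : i + 1 ≤ h) :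
    Kseries h i 1 = (((h:ℝ) - (i:ℝ)) * ((i:ℝ)+1) + ((h:ℝ) - 1 - (i:ℝ)) * (i:ℝ)) / (h:ℝ)^2 := by
  set s : ℤ → ℝ := fun j => 2⁻¹ * ((if j = (i:ℤ) then Useries h (j+1) else 0)
      + (if j = (i:ℤ)+1 then Useries h (j-1) else 0)) with hs
  have hsolve := solve_source (Kseries h i) s h
    (fun j a b => by rw [Kseries_harmonic h i hh j a b]) (Kseries_zero h i)
  rw [Kseries_top] at hsolve
  have hne : (h:ℝ) ≠ 0 := Nat.cast_ne_zero.mpr (by omega)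
  have hsum : (∑ t ∈ Finset.Icc 1 h, ((h:ℝ) - (t:ℝ)) * s (t:ℤ))
      = 2⁻¹ * ((((h:ℝ) - (i:ℝ)) * (((i:ℝ)+1)/(h:ℝ)))
          + (((h:ℝ) - ((i:ℝ)+1)) * ((i:ℝ)/(h:ℝ)))) := by
    have split : ∀ t : ℕ, ((h:ℝ) - (t:ℝ)) * s (t:ℤ)
        = 2⁻¹ * (((h:ℝ) - (t:ℝ)) * (if (t:ℤ) = (i:ℤ) then Useries h ((t:ℤ)+1) else 0))
          + 2⁻¹ * (((h:ℝ) - (t:ℝ)) * (if (t:ℤ) = (i:ℤ)+1 then Useries h ((t:ℤ)-1) else 0)) := by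
      intro t; rw [hs]; ring
    rw [Finset.sum_congr rfl (fun t _ => split t), Finset.sum_add_distrib,
      ← Finset.mul_sum, ← Finset.mul_sum]
    have sum1 : (∑ t ∈ Finset.Icc 1 h,
        ((h:ℝ) - (t:ℝ)) * (if (t:ℤ) = (i:ℤ) then Useries h ((t:ℤ)+1) else 0))
        = ((h:ℝ) - (i:ℝ)) * (((i:ℝ)+1)/(h:ℝ)) := by
      rw [Finset.sum_eq_single_of_mem i (Finset.mem_Icc.mpr ⟨hi1, by omega⟩)]
      · rw [if_pos rfl]
        have e1 : (i:ℤ)+1 = ((i+1 : ℕ):ℤ) := by push_cast; ring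
        rw [e1, Useries_eval h hh (i+1) (by omega)]
        push_cast
        ring
      · intro t ht hti
        have : ((t:ℤ)) ≠ (i:ℤ) := by exact_mod_cast hti
        rw [if_neg this, mul_zero]
    have sum2 : (∑ t ∈ Finset.Icc 1 h,
        ((h:ℝ) - (t:ℝ)) * (if (t:ℤ) = (i:ℤ)+1 then Useries h ((t:ℤ)-1) else 0))
        = ((h:ℝ) - ((i:ℝ)+1)) * ((i:ℝ)/(h:ℝ)) := by
      rw [Finset.sum_eq_single_of_mem (i+1) (Finset.mem_Icc.mpr ⟨by omega, by omega⟩)]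
      · have e0 : (((i+1:ℕ)):ℤ) = (i:ℤ)+1 := by push_cast; ring
        rw [e0, if_pos rfl]
        have e1 : (i:ℤ)+1-1 = ((i : ℕ):ℤ) := by push_cast; ring
        rw [e1, Useries_eval h hh i (by omega)]
        push_cast
        ring
      · intro t ht hti
        have : ((t:ℤ)) ≠ (i:ℤ)+1 := by
          intro hc
          exact hti (by exact_mod_cast hc)
        rw [if_neg this, mul_zero]
    rw [sum1, sum2]
    ring
  rw [hsum] at hsolve
  field_simp at hsolve ⊢
  linarith


/-! ## hitTime lemmas -/

lemma hitTime_le {a : ℤ} {x : ℕ → ℤ} {n : ℕ} (hx : x n = a) : hitTime a x ≤ (n:ℕ∞) :=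
  sInf_le ⟨n, hx, rfl⟩

lemma le_hitTime_iff {a : ℤ} {x : ℕ → ℤ} {n : ℕ} :
    (n:ℕ∞) ≤ hitTime a x ↔ ∀ k < n, x k ≠ a := by
  rw [hitTime, le_sInf_iff]
  constructor
  · intro H k hk hxk
    have := H (k:ℕ∞) ⟨k, hxk, rfl⟩
    rw [Nat.cast_le] at this
    omega
  · rintro H b ⟨k, hxk, rfl⟩
    rw [Nat.cast_le]
    by_contra hc
    exact H k (by omega) hxk

lemma lt_hitTime_iff {a : ℤ} {x : ℕ → ℤ} {n : ℕ} :
    (n:ℕ∞) < hitTime a x ↔ ∀ k ≤ n, x k ≠ a := by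
  have : (n:ℕ∞) < hitTime a x ↔ ((n+1:ℕ):ℕ∞) ≤ hitTime a x := by
    rw [Nat.cast_add, Nat.cast_one]
    exact (ENat.add_one_le_iff (by simp)).symm
  rw [this, le_hitTime_iff]
  constructor
  · intro H k hk; exact H k (by omega)
  · intro H k hk; exact H k (by omega)

lemma hitTime_eq_iff {a : ℤ} {x : ℕ → ℤ} {n : ℕ} :
    hitTime a x = (n:ℕ∞) ↔ x n = a ∧ ∀ k < n, x k ≠ a := by
  constructor
  · intro H
    have h1 : ∀ k < n, x k ≠ a := le_hitTime_iff.mp H.ge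
    refine ⟨?_, h1⟩
    by_contra hc
    have : (n:ℕ∞) < hitTime a x := by
      rw [lt_hitTime_iff]
      intro k hk
      rcases Nat.lt_or_ge k n with hlt | hge
      · exact h1 k hlt
      · have : k = n := by omega
        rw [this]; exact hc
    rw [H] at this
    exact lt_irrefl _ this
  · rintro ⟨h1, h2⟩
    refine le_antisymm (hitTime_le h1) (le_hitTime_iff.mpr h2)

/-! ## The events -/

def Dset (h : ℕ) (n : ℕ) : Set (ℕ → ℤ) :=
  {x | x n = (h:ℤ) ∧ ∀ k < n, x k ≠ 0 ∧ x k ≠ (h:ℤ)}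

lemma E_eq_iUnion (h : ℕ) (hh : 1 ≤ h) :
    {x : ℕ → ℤ | hitTime (h:ℤ) x < hitTime 0 x} = ⋃ n, Dset h n := by
  ext x
  simp only [Set.mem_setOf_eq, Set.mem_iUnion]
  constructor
  · intro hx
    have hne : hitTime (h:ℤ) x ≠ ⊤ := (hx.trans_le le_top).ne
    obtain ⟨n, hn⟩ : ∃ n : ℕ, hitTime (h:ℤ) x = (n:ℕ∞) := by
      cases hT : hitTime (h:ℤ) x with
      | top => exact absurd hT hne
      | coe m => exact ⟨m, rfl⟩
    obtain ⟨h1, h2⟩ := hitTime_eq_iff.mp hn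
    refine ⟨n, h1, fun k hk => ⟨?_, h2 k hk⟩⟩
    intro hc
    have : hitTime 0 x ≤ (k:ℕ∞) := hitTime_le hc
    rw [hn] at hx
    have : hitTime 0 x < hitTime 0 x :=
      lt_of_le_of_lt (this.trans (by exact_mod_cast Nat.cast_le.mpr hk.le)) hx
    exact lt_irrefl _ this
  · rintro ⟨n, h1, h2⟩
    have hT : hitTime (h:ℤ) x = (n:ℕ∞) :=
      hitTime_eq_iff.mpr ⟨h1, fun k hk => (h2 k hk).2⟩
    have hT0 : (n:ℕ∞) < hitTime 0 x := by
      rw [lt_hitTime_iff]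
      intro k hk
      rcases Nat.lt_or_ge k n with hlt | hge
      · exact (h2 k hlt).1
      · have : k = n := by omega
        rw [this, h1]
        exact_mod_cast (by omega : (h:ℤ) ≠ 0)
    rw [hT]
    exact hT0

lemma Dset_disjoint (h : ℕ) : Pairwise (Function.onFun Disjoint (Dset h)) := by
  intro n m hnm
  rw [Function.onFun, Set.disjoint_left]
  rintro x ⟨h1, h2⟩ ⟨g1, g2⟩
  rcases Nat.lt_or_ge n m with hlt | hge
  · exact (g2 n hlt).2 h1
  · have : m < n := by omega
    exact (h2 m this).2 g1

lemma meas_coord (k : ℕ) (c : ℤ) : MeasurableSet {x : ℕ → ℤ | x k = c} := by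
  have : {x : ℕ → ℤ | x k = c} = (fun x : ℕ → ℤ => x k) ⁻¹' {c} := rfl
  rw [this]
  exact (measurable_pi_apply k) (measurableSet_singleton c)

lemma meas_Dset (h n : ℕ) : MeasurableSet (Dset h n) := by
  have : Dset h n = {x : ℕ → ℤ | x n = (h:ℤ)} ∩
      ⋂ (k : ℕ) (_ : k < n), ({x : ℕ → ℤ | x k = 0}ᶜ ∩ {x : ℕ → ℤ | x k = (h:ℤ)}ᶜ) := by
    ext x
    simp only [Dset, Set.mem_setOf_eq, Set.mem_inter_iff, Set.mem_iInter, Set.mem_compl_iff]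
    try tauto
  rw [this]
  exact (meas_coord n _).inter
    (MeasurableSet.iInter fun k => MeasurableSet.iInter fun _ =>
      ((meas_coord k 0).compl.inter (meas_coord k _).compl))


/-! ## Cylinder partition -/

lemma meas_cyl (n : ℕ) (f : ℕ → ℤ) : MeasurableSet {x : ℕ → ℤ | ∀ k ≤ n, x k = f k} := by
  have : {x : ℕ → ℤ | ∀ k ≤ n, x k = f k}
      = ⋂ (k : ℕ) (_ : k ≤ n), {x : ℕ → ℤ | x k = f k} := by
    ext x
    simp only [Set.mem_setOf_eq, Set.mem_iInter]
  rw [this]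
  exact MeasurableSet.iInter fun k => MeasurableSet.iInter fun _ => meas_coord k (f k)

lemma partition (Q : Measure (ℕ → ℤ)) (hQ : IsSRWFrom Q 1) (n : ℕ) (S : Set (ℕ → ℤ))
    (hS : MeasurableSet S)
    (hdep : ∀ x y : ℕ → ℤ, (∀ k ≤ n, x k = y k) → x ∈ S → y ∈ S) :
    Q S = ∑ s : Fin n → Bool, if posi 1 (ext s) ∈ S then ((2:ℝ≥0∞))⁻¹ ^ n else 0 := by
  haveI hprob : IsProbabilityMeasure Q := hQ.1
  set C : (Fin n → Bool) → Set (ℕ → ℤ) :=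
    fun s => {x | ∀ k ≤ n, x k = posi 1 (ext s) k} with hC
  have hCval : ∀ s, Q (C s) = (2:ℝ≥0∞)⁻¹ ^ n := by
    intro s
    rw [hC]
    have hadm : posi 1 (ext s) 0 = 1 ∧ ∀ k < n,
        posi 1 (ext s) (k+1) - posi 1 (ext s) k = 1 ∨
        posi 1 (ext s) (k+1) - posi 1 (ext s) k = -1 := by
      refine ⟨posi_zero 1 (ext s), fun k _ => ?_⟩
      rw [posi_succ]
      cases hb : ext s k <;> simp [stepB]
    rw [hQ.2 n (posi 1 (ext s)), if_pos hadm, one_div]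
  have hCmeas : ∀ s, MeasurableSet (C s) := fun s => meas_cyl n _
  have hCdisj : Pairwise (Function.onFun Disjoint C) := by
    intro s t hst
    rw [Function.onFun, Set.disjoint_left]
    intro x hxs hxt
    apply hst
    funext m
    have hpos : ∀ k ≤ n, posi 1 (ext s) k = posi 1 (ext t) k := fun k hk =>
      (hxs k hk).symm.trans (hxt k hk)
    have hstep : stepB (ext s (m:ℕ)) = stepB (ext t (m:ℕ)) := by
      have e1 := hpos (m:ℕ) (by omega)
      have e2 := hpos ((m:ℕ)+1) (by exact_mod_cast m.isLt)
      rw [posi_succ, posi_succ, e1] at e2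
      omega
    have hb : ext s (m:ℕ) = ext t (m:ℕ) := by
      cases h1 : ext s (m:ℕ) <;> cases h2 : ext t (m:ℕ) <;>
        rw [h1, h2] at hstep <;> simp [stepB] at hstep <;> rfl
    have es : ext s (m:ℕ) = s m := by
      unfold ext
      rw [dif_pos m.isLt]
    have et : ext t (m:ℕ) = t m := by
      unfold ext
      rw [dif_pos m.isLt]
    rw [es, et] at hb
    exact hb
  have hUnion : Q (⋃ s, C s) = 1 := by
    rw [measure_iUnion hCdisj hCmeas, tsum_fintype]
    simp only [hCval, Finset.sum_const, Finset.card_univ]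
    rw [nsmul_eq_mul]
    have hcard : (Fintype.card (Fin n → Bool) : ℝ≥0∞) = 2 ^ n := by
      rw [Fintype.card_fun]
      simp
    rw [hcard, ← mul_pow, ENNReal.mul_inv_cancel (by norm_num) (by norm_num), one_pow]
  have hcompl : Q ((⋃ s, C s)ᶜ) = 0 := by
    rw [measure_compl (MeasurableSet.iUnion hCmeas) (measure_ne_top Q _), hUnion,
      measure_univ, tsub_self]
  have hsplit : Q S = Q (S ∩ ⋃ s, C s) := by
    have h1 := measure_inter_add_diff S (MeasurableSet.iUnion hCmeas) (μ := Q)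
    have h2 : Q (S \ ⋃ s, C s) = 0 :=
      le_antisymm ((measure_mono (Set.diff_subset_compl _ _)).trans hcompl.le) (zero_le)
    rw [h2, add_zero] at h1
    exact h1.symm
  rw [hsplit, Set.inter_iUnion, measure_iUnion
    (hCdisj.mono fun a b hab => hab.mono Set.inter_subset_right Set.inter_subset_right)
    (fun s => hS.inter (hCmeas s)), tsum_fintype]
  refine Finset.sum_congr rfl fun s _ => ?_
  by_cases hmem : posi 1 (ext s) ∈ S
  · rw [if_pos hmem]
    have : S ∩ C s = C s := by
      apply Set.inter_eq_self_of_subset_right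
      intro x hx
      exact hdep (posi 1 (ext s)) x (fun k hk => (hx k hk).symm) hmem
    rw [this, hCval]
  · rw [if_neg hmem]
    have : S ∩ C s = ∅ := by
      ext x
      simp only [Set.mem_inter_iff, Set.mem_empty_iff_false, iff_false, not_and]
      intro hxS hxC
      exact hmem (hdep x (posi 1 (ext s)) (fun k hk => hxC k hk) hxS)
    rw [this, measure_empty]


lemma ofReal_halfpow (n : ℕ) : ENNReal.ofReal ((2⁻¹:ℝ)^n) = (2:ℝ≥0∞)⁻¹ ^ n := by
  rw [ENNReal.ofReal_pow (by norm_num)]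
  congr 1
  rw [ENNReal.ofReal_inv_of_pos (by norm_num)]
  norm_num

lemma ofReal_ite_sum {α : Type*} [Fintype α] (P : α → Prop) {D : ∀ s, Decidable (P s)} (n : ℕ) :
    ENNReal.ofReal (∑ s : α, @ite _ (P s) (D s) ((2⁻¹:ℝ)^n) 0)
      = ∑ s : α, @ite _ (P s) (D s) ((2:ℝ≥0∞)⁻¹ ^ n) 0 := by
  rw [ENNReal.ofReal_sum_of_nonneg (fun s _ => by positivity)]
  refine Finset.sum_congr rfl fun s _ => ?_
  by_cases hs : P s
  · rw [if_pos hs, if_pos hs, ofReal_halfpow]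
  · rw [if_neg hs, if_neg hs, ENNReal.ofReal_zero]

lemma Dset_mem_iff (h n : ℕ) (s : Fin n → Bool) :
    posi 1 (ext s) ∈ Dset h n ↔ ok h 1 n (ext s) := Iff.rfl

lemma Q_Dset (Q : Measure (ℕ → ℤ)) (hQ : IsSRWFrom Q 1) (h n : ℕ) :
    Q (Dset h n) = ENNReal.ofReal (UA h 1 n) := by
  rw [partition Q hQ n (Dset h n) (meas_Dset h n) ?_]
  · rw [UA, ofReal_ite_sum]
    exact Finset.sum_congr rfl fun s _ => ite_congr' (Dset_mem_iff h n s) _ _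
  · intro x y hxy ⟨h1, h2⟩
    refine ⟨(hxy n (le_refl n)).symm.trans h1, fun k hk => ?_⟩
    rw [← hxy k (by omega)]
    exact h2 k hk

lemma measure_E (Q : Measure (ℕ → ℤ)) (hQ : IsSRWFrom Q 1) (h : ℕ) (hh : 1 ≤ h) :
    Q {x | hitTime (h:ℤ) x < hitTime 0 x} = ENNReal.ofReal (Useries h 1) := by
  rw [E_eq_iUnion h hh, measure_iUnion (Dset_disjoint h) (meas_Dset h)]
  rw [tsum_congr (fun n => Q_Dset Q hQ h n)]
  rw [← ENNReal.ofReal_tsum_of_nonneg (fun n => UA_nonneg h 1 n)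
    (summable_UA h hh 1 (by omega) (by exact_mod_cast hh))]
  rfl


lemma numerator_V (Q : Measure (ℕ → ℤ)) (hQ : IsSRWFrom Q 1) (h i : ℕ)
    (hh : 1 ≤ h) (hi1 : 1 ≤ i) (hi2 : i + 1 ≤ h) :
    ∫⁻ x in {x | hitTime (h:ℤ) x < hitTime 0 x}, visitCount (i:ℤ) (h:ℤ) x ∂Q
      = ENNReal.ofReal (Vseries h i 1) := by
  set E := {x : ℕ → ℤ | hitTime (h:ℤ) x < hitTime 0 x} with hE
  set A : ℕ → Set (ℕ → ℤ) :=
    fun k => {x | (∀ m < k, x m ≠ (h:ℤ)) ∧ x k = (i:ℤ)} with hA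
  have hAmeas : ∀ k, MeasurableSet (A k) := by
    intro k
    have : A k = (⋂ (m : ℕ) (_ : m < k), {x : ℕ → ℤ | x m = (h:ℤ)}ᶜ)
        ∩ {x : ℕ → ℤ | x k = (i:ℤ)} := by
      ext x
      simp only [hA, Set.mem_setOf_eq, Set.mem_inter_iff, Set.mem_iInter, Set.mem_compl_iff]
      try tauto
    rw [this]
    exact (MeasurableSet.iInter fun m => MeasurableSet.iInter fun _ =>
      (meas_coord m _).compl).inter (meas_coord k _)
  have hvc : ∀ x, visitCount (i:ℤ) (h:ℤ) x
      = ∑' k, Set.indicator (A k) (1 : (ℕ → ℤ) → ℝ≥0∞) x := by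
    intro x
    unfold visitCount
    refine tsum_congr fun k => ?_
    rw [Set.indicator_apply]
    refine ite_congr' ?_ _ _
    constructor
    · rintro ⟨h1, h2⟩
      exact ⟨le_hitTime_iff.mp h1, h2⟩
    · rintro ⟨h1, h2⟩
      exact ⟨le_hitTime_iff.mpr h1, h2⟩
  have step1 : (∫⁻ x in E, visitCount (i:ℤ) (h:ℤ) x ∂Q) = ∑' k, Q (A k ∩ E) := by
    rw [lintegral_congr hvc,
      lintegral_tsum (fun k => (measurable_one.indicator (hAmeas k)).aemeasurable)]
    refine tsum_congr fun k => ?_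
    rw [lintegral_indicator_one (hAmeas k), Measure.restrict_apply (hAmeas k)]
  have hQAD : ∀ k n, Q (A k ∩ Dset h n) = if k < n then
      ENNReal.ofReal (∑ s : Fin n → Bool,
        if ok h 1 n (ext s) ∧ posi 1 (ext s) k = (i:ℤ) then (2⁻¹:ℝ)^n else 0) else 0 := by
    intro k n
    by_cases hkn : k < n
    · rw [if_pos hkn]
      rw [partition Q hQ n (A k ∩ Dset h n) ((hAmeas k).inter (meas_Dset h n)) ?_]
      · rw [ofReal_ite_sum]
        refine Finset.sum_congr rfl fun s _ => ite_congr' ?_ _ _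
        constructor
        · rintro ⟨hA1, hD⟩
          exact ⟨hD, hA1.2⟩
        · rintro ⟨hok, hki⟩
          exact ⟨⟨fun m hm => (hok.2 m (by omega)).2, hki⟩, hok⟩
      · rintro x y hxy ⟨⟨a1, a2⟩, d1, d2⟩
        refine ⟨⟨fun m hm => by rw [← hxy m (by omega)]; exact a1 m hm,
          by rw [← hxy k (by omega)]; exact a2⟩,
          by rw [← hxy n (le_refl n)]; exact d1,
          fun m hm => by rw [← hxy m (by omega)]; exact d2 m hm⟩
    · rw [if_neg hkn]
      have : A k ∩ Dset h n = ∅ := by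
        ext x
        simp only [Set.mem_inter_iff, Set.mem_empty_iff_false, iff_false, not_and]
        rintro ⟨a1, a2⟩ ⟨d1, d2⟩
        rcases Nat.lt_or_ge n k with hlt | hge
        · exact a1 n hlt d1
        · have : n = k := by omega
          rw [this] at d1
          rw [a2] at d1
          have : (i:ℤ) ≠ (h:ℤ) := by exact_mod_cast (by omega : i ≠ h)
          exact this d1
      rw [this, measure_empty]
  have step2 : ∀ k, Q (A k ∩ E) = ∑' n, Q (A k ∩ Dset h n) := by
    intro k
    rw [hE, E_eq_iUnion h hh, Set.inter_iUnion]
    exact measure_iUnion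
      ((Dset_disjoint h).mono fun a b hab =>
        hab.mono Set.inter_subset_right Set.inter_subset_right)
      (fun n => (hAmeas k).inter (meas_Dset h n))
  rw [step1, tsum_congr step2]
  rw [tsum_congr (fun k => tsum_congr (fun n => hQAD k n))]
  rw [ENNReal.tsum_comm]
  have inner : ∀ n, (∑' k, if k < n then
      ENNReal.ofReal (∑ s : Fin n → Bool,
        if ok h 1 n (ext s) ∧ posi 1 (ext s) k = (i:ℤ) then (2⁻¹:ℝ)^n else 0) else 0)
      = ENNReal.ofReal (VA h i 1 n) := by
    intro n
    rw [tsum_eq_sum (s := Finset.range n)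
      (fun k hk => by rw [if_neg (by simpa using hk)])]
    rw [Finset.sum_congr rfl (fun k hk => by rw [if_pos (Finset.mem_range.mp hk)])]
    rw [← ENNReal.ofReal_sum_of_nonneg (fun k _ => Finset.sum_nonneg fun s _ => by positivity)]
    congr 1
    rw [VA, Finset.sum_comm]
  rw [tsum_congr inner]
  rw [← ENNReal.ofReal_tsum_of_nonneg (fun n => VA_nonneg h i 1 n)
    (summable_VA h i hh 1 (by omega) (by exact_mod_cast hh))]
  rfl


lemma numerator_K (Q : Measure (ℕ → ℤ)) (hQ : IsSRWFrom Q 1) (h i : ℕ)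
    (hh : 1 ≤ h) (hi1 : 1 ≤ i) (hi2 : i + 1 ≤ h) :
    ∫⁻ x in {x | hitTime (h:ℤ) x < hitTime 0 x}, crossCount (i:ℤ) (h:ℤ) x ∂Q
      = ENNReal.ofReal (Kseries h i 1) := by
  set E := {x : ℕ → ℤ | hitTime (h:ℤ) x < hitTime 0 x} with hE
  set A : ℕ → Set (ℕ → ℤ) :=
    fun k => {x | (∀ m ≤ k, x m ≠ (h:ℤ)) ∧
      ((x k = (i:ℤ) ∧ x (k+1) = (i:ℤ)+1) ∨ (x k = (i:ℤ)+1 ∧ x (k+1) = (i:ℤ)))} with hA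
  have hAmeas : ∀ k, MeasurableSet (A k) := by
    intro k
    have : A k = (⋂ (m : ℕ) (_ : m ≤ k), {x : ℕ → ℤ | x m = (h:ℤ)}ᶜ)
        ∩ (({x : ℕ → ℤ | x k = (i:ℤ)} ∩ {x : ℕ → ℤ | x (k+1) = (i:ℤ)+1})
          ∪ ({x : ℕ → ℤ | x k = (i:ℤ)+1} ∩ {x : ℕ → ℤ | x (k+1) = (i:ℤ)})) := by
      ext x
      simp only [hA, Set.mem_setOf_eq, Set.mem_inter_iff, Set.mem_iInter, Set.mem_compl_iff,
        Set.mem_union]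
      try tauto
    rw [this]
    exact (MeasurableSet.iInter fun m => MeasurableSet.iInter fun _ =>
      (meas_coord m _).compl).inter
      (((meas_coord k _).inter (meas_coord (k+1) _)).union
        ((meas_coord k _).inter (meas_coord (k+1) _)))
  have hvc : ∀ x, crossCount (i:ℤ) (h:ℤ) x
      = ∑' k, Set.indicator (A k) (1 : (ℕ → ℤ) → ℝ≥0∞) x := by
    intro x
    unfold crossCount
    refine tsum_congr fun k => ?_
    rw [Set.indicator_apply]
    refine ite_congr' ?_ _ _
    constructor
    · rintro ⟨h1, h2⟩
      exact ⟨lt_hitTime_iff.mp h1, h2⟩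
    · rintro ⟨h1, h2⟩
      exact ⟨lt_hitTime_iff.mpr h1, h2⟩
  have step1 : (∫⁻ x in E, crossCount (i:ℤ) (h:ℤ) x ∂Q) = ∑' k, Q (A k ∩ E) := by
    rw [lintegral_congr hvc,
      lintegral_tsum (fun k => (measurable_one.indicator (hAmeas k)).aemeasurable)]
    refine tsum_congr fun k => ?_
    rw [lintegral_indicator_one (hAmeas k), Measure.restrict_apply (hAmeas k)]
  have hQAD : ∀ k n, Q (A k ∩ Dset h n) = if k < n then
      ENNReal.ofReal (∑ s : Fin n → Bool,
        if ok h 1 n (ext s) ∧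
            ((posi 1 (ext s) k = (i:ℤ) ∧ posi 1 (ext s) (k+1) = (i:ℤ)+1) ∨
             (posi 1 (ext s) k = (i:ℤ)+1 ∧ posi 1 (ext s) (k+1) = (i:ℤ)))
          then (2⁻¹:ℝ)^n else 0) else 0 := by
    intro k n
    by_cases hkn : k < n
    · rw [if_pos hkn]
      rw [partition Q hQ n (A k ∩ Dset h n) ((hAmeas k).inter (meas_Dset h n)) ?_]
      · rw [ofReal_ite_sum]
        refine Finset.sum_congr rfl fun s _ => ite_congr' ?_ _ _
        constructor
        · rintro ⟨hA1, hD⟩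
          exact ⟨hD, hA1.2⟩
        · rintro ⟨hok, hki⟩
          exact ⟨⟨fun m hm => (hok.2 m (by omega)).2, hki⟩, hok⟩
      · rintro x y hxy ⟨⟨a1, a2⟩, d1, d2⟩
        have hk1 : k + 1 ≤ n := by omega
        refine ⟨⟨fun m hm => by rw [← hxy m (by omega)]; exact a1 m hm, ?_⟩,
          by rw [← hxy n (le_refl n)]; exact d1,
          fun m hm => by rw [← hxy m (by omega)]; exact d2 m hm⟩
        rcases a2 with ⟨b1, b2⟩ | ⟨b1, b2⟩
        · exact Or.inl ⟨by rw [← hxy k (by omega)]; exact b1,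
            by rw [← hxy (k+1) hk1]; exact b2⟩
        · exact Or.inr ⟨by rw [← hxy k (by omega)]; exact b1,
            by rw [← hxy (k+1) hk1]; exact b2⟩
    · rw [if_neg hkn]
      have : A k ∩ Dset h n = ∅ := by
        ext x
        simp only [Set.mem_inter_iff, Set.mem_empty_iff_false, iff_false, not_and]
        rintro ⟨a1, _⟩ ⟨d1, _⟩
        exact a1 n (by omega) d1
      rw [this, measure_empty]
  have step2 : ∀ k, Q (A k ∩ E) = ∑' n, Q (A k ∩ Dset h n) := by
    intro k
    rw [hE, E_eq_iUnion h hh, Set.inter_iUnion]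
    exact measure_iUnion
      ((Dset_disjoint h).mono fun a b hab =>
        hab.mono Set.inter_subset_right Set.inter_subset_right)
      (fun n => (hAmeas k).inter (meas_Dset h n))
  rw [step1, tsum_congr step2]
  rw [tsum_congr (fun k => tsum_congr (fun n => hQAD k n))]
  rw [ENNReal.tsum_comm]
  have inner : ∀ n, (∑' k, if k < n then
      ENNReal.ofReal (∑ s : Fin n → Bool,
        if ok h 1 n (ext s) ∧
            ((posi 1 (ext s) k = (i:ℤ) ∧ posi 1 (ext s) (k+1) = (i:ℤ)+1) ∨
             (posi 1 (ext s) k = (i:ℤ)+1 ∧ posi 1 (ext s) (k+1) = (i:ℤ)))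
          then (2⁻¹:ℝ)^n else 0) else 0)
      = ENNReal.ofReal (KA h i 1 n) := by
    intro n
    rw [tsum_eq_sum (s := Finset.range n)
      (fun k hk => by rw [if_neg (by simpa using hk)])]
    rw [Finset.sum_congr rfl (fun k hk => by rw [if_pos (Finset.mem_range.mp hk)])]
    rw [← ENNReal.ofReal_sum_of_nonneg (fun k _ => Finset.sum_nonneg fun s _ => by positivity)]
    congr 1
    rw [KA, Finset.sum_comm]
  rw [tsum_congr inner]
  rw [← ENNReal.ofReal_tsum_of_nonneg (fun n => KA_nonneg h i 1 n)
    (summable_KA h i hh 1 (by omega) (by exact_mod_cast hh))]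
  rfl


/-! ## Measurability of the counts -/

lemma meas_visit_set (i a : ℤ) (k : ℕ) :
    MeasurableSet {x : ℕ → ℤ | (k:ℕ∞) ≤ hitTime a x ∧ x k = i} := by
  have : {x : ℕ → ℤ | (k:ℕ∞) ≤ hitTime a x ∧ x k = i}
      = (⋂ (m : ℕ) (_ : m < k), {x : ℕ → ℤ | x m = a}ᶜ) ∩ {x : ℕ → ℤ | x k = i} := by
    ext x
    simp only [Set.mem_setOf_eq, Set.mem_inter_iff, Set.mem_iInter, Set.mem_compl_iff,
      le_hitTime_iff]
    try tauto
  rw [this]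
  exact (MeasurableSet.iInter fun m => MeasurableSet.iInter fun _ =>
    (meas_coord m _).compl).inter (meas_coord k _)

lemma meas_cross_set (i a : ℤ) (k : ℕ) :
    MeasurableSet {x : ℕ → ℤ | (k:ℕ∞) < hitTime a x ∧
      ((x k = i ∧ x (k+1) = i+1) ∨ (x k = i+1 ∧ x (k+1) = i))} := by
  have : {x : ℕ → ℤ | (k:ℕ∞) < hitTime a x ∧
        ((x k = i ∧ x (k+1) = i+1) ∨ (x k = i+1 ∧ x (k+1) = i))}
      = (⋂ (m : ℕ) (_ : m ≤ k), {x : ℕ → ℤ | x m = a}ᶜ)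
        ∩ (({x : ℕ → ℤ | x k = i} ∩ {x : ℕ → ℤ | x (k+1) = i+1})
          ∪ ({x : ℕ → ℤ | x k = i+1} ∩ {x : ℕ → ℤ | x (k+1) = i})) := by
    ext x
    simp only [Set.mem_setOf_eq, Set.mem_inter_iff, Set.mem_iInter, Set.mem_compl_iff,
      Set.mem_union, lt_hitTime_iff]
    try tauto
  rw [this]
  exact (MeasurableSet.iInter fun m => MeasurableSet.iInter fun _ =>
    (meas_coord m _).compl).inter
    (((meas_coord k _).inter (meas_coord (k+1) _)).union
      ((meas_coord k _).inter (meas_coord (k+1) _)))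

lemma measurable_visitCount (i a : ℤ) : Measurable (visitCount i a) := by
  unfold visitCount
  refine Measurable.ennreal_tsum fun k => ?_
  have : (fun x : ℕ → ℤ => if ((k:ℕ∞) ≤ hitTime a x ∧ x k = i) then (1:ℝ≥0∞) else 0)
      = Set.indicator {x : ℕ → ℤ | (k:ℕ∞) ≤ hitTime a x ∧ x k = i} 1 := by
    funext x
    rw [Set.indicator_apply]
    exact ite_congr' Iff.rfl _ _
  rw [this]
  exact measurable_one.indicator (meas_visit_set i a k)

lemma measurable_crossCount (i a : ℤ) : Measurable (crossCount i a) := by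
  unfold crossCount
  refine Measurable.ennreal_tsum fun k => ?_
  have : (fun x : ℕ → ℤ => if ((k:ℕ∞) < hitTime a x ∧
        ((x k = i ∧ x (k+1) = i+1) ∨ (x k = i+1 ∧ x (k+1) = i))) then (1:ℝ≥0∞) else 0)
      = Set.indicator {x : ℕ → ℤ | (k:ℕ∞) < hitTime a x ∧
        ((x k = i ∧ x (k+1) = i+1) ∨ (x k = i+1 ∧ x (k+1) = i))} 1 := by
    funext x
    rw [Set.indicator_apply]
    exact ite_congr' Iff.rfl _ _
  rw [this]
  exact measurable_one.indicator (meas_cross_set i a k)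

lemma meas_E_set (h : ℕ) (hh : 1 ≤ h) :
    MeasurableSet {x : ℕ → ℤ | hitTime (h:ℤ) x < hitTime 0 x} := by
  rw [E_eq_iUnion h hh]
  exact MeasurableSet.iUnion (meas_Dset h)

/-! ## Reflection -/

def reflMap (c : ℤ) : (ℕ → ℤ) → (ℕ → ℤ) := fun x k => c - x k

lemma measurable_reflMap (c : ℤ) : Measurable (reflMap c) :=
  measurable_pi_lambda _ fun k => measurable_const.sub (measurable_pi_apply k)

lemma hitTime_reflMap (c a : ℤ) (x : ℕ → ℤ) :
    hitTime a (reflMap c x) = hitTime (c - a) x := by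
  have hset : {k : ℕ | reflMap c x k = a} = {k : ℕ | x k = c - a} := by
    ext k
    simp only [Set.mem_setOf_eq, reflMap]
    omega
  unfold hitTime
  rw [hset]

lemma visitCount_reflMap (c i a : ℤ) (x : ℕ → ℤ) :
    visitCount i a (reflMap c x) = visitCount (c - i) (c - a) x := by
  unfold visitCount
  refine tsum_congr fun k => ?_
  refine ite_congr' ?_ _ _
  rw [hitTime_reflMap]
  constructor
  · rintro ⟨h1, h2⟩
    exact ⟨h1, by simp only [reflMap] at h2; omega⟩
  · rintro ⟨h1, h2⟩
    exact ⟨h1, by simp only [reflMap]; omega⟩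

lemma crossCount_reflMap (c i a : ℤ) (x : ℕ → ℤ) :
    crossCount i a (reflMap c x) = crossCount (c - i - 1) (c - a) x := by
  unfold crossCount
  refine tsum_congr fun k => ?_
  refine ite_congr' ?_ _ _
  rw [hitTime_reflMap]
  refine and_congr Iff.rfl ?_
  simp only [reflMap]
  omega

lemma IsSRWFrom_reflMap (P : Measure (ℕ → ℤ)) (j : ℤ) (hP : IsSRWFrom P j) (c : ℤ) :
    IsSRWFrom (P.map (reflMap c)) (c - j) := by
  haveI := hP.1
  refine ⟨Measure.isProbabilityMeasure_map (measurable_reflMap c).aemeasurable, fun n f => ?_⟩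
  rw [Measure.map_apply (measurable_reflMap c) (meas_cyl n f)]
  have hpre : reflMap c ⁻¹' {x | ∀ k ≤ n, x k = f k}
      = {x | ∀ k ≤ n, x k = (fun k => c - f k) k} := by
    ext x
    simp only [Set.mem_preimage, Set.mem_setOf_eq, reflMap]
    constructor
    · intro H k hk
      have := H k hk
      omega
    · intro H k hk
      have := H k hk
      omega
  rw [hpre, hP.2 n (fun k => c - f k)]
  refine ite_congr' ?_ _ _
  constructor
  · rintro ⟨h1, h2⟩
    refine ⟨by omega, fun k hk => ?_⟩
    have := h2 k hk
    omega
  · rintro ⟨h1, h2⟩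
    refine ⟨by omega, fun k hk => ?_⟩
    have := h2 k hk
    omega


/-! ## Legs with division -/

lemma leg_V (Q : Measure (ℕ → ℤ)) (hQ : IsSRWFrom Q 1) (h i : ℕ)
    (hh : 1 ≤ h) (hi1 : 1 ≤ i) (hi2 : i + 1 ≤ h) :
    (∫⁻ x in {x | hitTime (h:ℤ) x < hitTime 0 x}, visitCount (i:ℤ) (h:ℤ) x ∂Q)
      / Q {x | hitTime (h:ℤ) x < hitTime 0 x}
    = ENNReal.ofReal (2 * (i:ℝ) * ((h:ℝ) - i) / h) := by
  rw [numerator_V Q hQ h i hh hi1 hi2, measure_E Q hQ h hh]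
  have hU1 : Useries h 1 = 1 / (h:ℝ) := by
    have := Useries_eval h hh 1 (by omega)
    simpa using this
  rw [hU1, Vseries_one h i hh hi1 hi2]
  rw [← ENNReal.ofReal_div_of_pos (by positivity : (0:ℝ) < 1/(h:ℝ))]
  congr 1
  have hne : (h:ℝ) ≠ 0 := Nat.cast_ne_zero.mpr (by omega)
  field_simp

lemma leg_K (Q : Measure (ℕ → ℤ)) (hQ : IsSRWFrom Q 1) (h i : ℕ)
    (hh : 1 ≤ h) (hi1 : 1 ≤ i) (hi2 : i + 1 ≤ h) :
    (∫⁻ x in {x | hitTime (h:ℤ) x < hitTime 0 x}, crossCount (i:ℤ) (h:ℤ) x ∂Q)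
      / Q {x | hitTime (h:ℤ) x < hitTime 0 x}
    = ENNReal.ofReal ((((h:ℝ) - i) * ((i:ℝ)+1) + ((h:ℝ) - 1 - i) * (i:ℝ)) / h) := by
  rw [numerator_K Q hQ h i hh hi1 hi2, measure_E Q hQ h hh]
  have hU1 : Useries h 1 = 1 / (h:ℝ) := by
    have := Useries_eval h hh 1 (by omega)
    simpa using this
  rw [hU1, Kseries_one h i hh hi1 hi2]
  rw [← ENNReal.ofReal_div_of_pos (by positivity : (0:ℝ) < 1/(h:ℝ))]
  congr 1
  have hne : (h:ℝ) ≠ 0 := Nat.cast_ne_zero.mpr (by omega)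
  field_simp

end SRW13


open SRW13 in
/-- Expected number of visits to `i` and of `{i,i+1}`-crossings for the two
conditioned legs of the excursion conditioned to have height `h`. -/
theorem statement_13 (P : ℤ → Measure (ℕ → ℤ)) (hP : ∀ j : ℤ, IsSRWFrom (P j) j)
    (h i : ℕ) (hh : 2 ≤ h) (hi : 1 ≤ i) (hih : i ≤ h - 1) :
    ((∫⁻ x in {x | hitTime (h : ℤ) x < hitTime 0 x},
          visitCount (i : ℤ) (h : ℤ) x ∂(P 1)) /
        P 1 {x | hitTime (h : ℤ) x < hitTime 0 x} =
      ((2 * i * (h - i) : ℕ) : ℝ≥0∞) / (h : ℝ≥0∞)) ∧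
    ((∫⁻ x in {x | hitTime 0 x < hitTime ((h : ℤ) + 1) x},
          visitCount (i : ℤ) 0 x ∂(P (h : ℤ))) /
        P (h : ℤ) {x | hitTime 0 x < hitTime ((h : ℤ) + 1) x} =
      ((2 * i * (h + 1 - i) : ℕ) : ℝ≥0∞) / ((h : ℝ≥0∞) + 1)) ∧
    ((∫⁻ x in {x | hitTime (h : ℤ) x < hitTime 0 x},
          crossCount (i : ℤ) (h : ℤ) x ∂(P 1)) /
        P 1 {x | hitTime (h : ℤ) x < hitTime 0 x} =
      ENNReal.ofReal (2 * ((h : ℝ) - i) * ((i : ℝ) + 1) / h - 1)) ∧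
    ((∫⁻ x in {x | hitTime 0 x < hitTime ((h : ℤ) + 1) x},
          crossCount (i : ℤ) 0 x ∂(P (h : ℤ))) /
        P (h : ℤ) {x | hitTime 0 x < hitTime ((h : ℤ) + 1) x} =
      ENNReal.ofReal (2 * ((h : ℝ) + 1 - i) * ((i : ℝ) + 1) / ((h : ℝ) + 1) - 1)) := by
  have h1le : 1 ≤ h := by omega
  have hi2 : i + 1 ≤ h := by omega
  have hne : (h:ℝ) ≠ 0 := Nat.cast_ne_zero.mpr (by omega)
  have hpos : (0:ℝ) < (h:ℝ) := by positivity
  -- reflection setup for the second leg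
  set c : ℤ := (h:ℤ) + 1 with hc
  set Q' : Measure (ℕ → ℤ) := (P (h:ℤ)).map (reflMap c) with hQ'def
  have hmap : IsSRWFrom Q' 1 := by
    have := IsSRWFrom_reflMap (P (h:ℤ)) (h:ℤ) (hP (h:ℤ)) c
    have e : c - (h:ℤ) = 1 := by rw [hc]; ring
    rwa [e] at this
  have hcast1 : (((h+1:ℕ)):ℤ) = c := by rw [hc]; push_cast; ring
  have hpre : reflMap c ⁻¹' {x | hitTime (((h+1:ℕ)):ℤ) x < hitTime 0 x}
      = {x | hitTime 0 x < hitTime ((h:ℤ) + 1) x} := by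
    ext x
    simp only [Set.mem_preimage, Set.mem_setOf_eq, hitTime_reflMap]
    rw [hcast1, show c - c = 0 from by ring, show c - 0 = c from by ring, hc]
  have hmeasE' : MeasurableSet {x : ℕ → ℤ | hitTime (((h+1:ℕ)):ℤ) x < hitTime 0 x} :=
    meas_E_set (h+1) (by omega)
  have hden : P (h:ℤ) {x | hitTime 0 x < hitTime ((h:ℤ) + 1) x}
      = Q' {x | hitTime (((h+1:ℕ)):ℤ) x < hitTime 0 x} := by
    rw [hQ'def, Measure.map_apply (measurable_reflMap c) hmeasE', hpre]
  refine ⟨?_, ?_, ?_, ?_⟩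
  · rw [leg_V (P 1) (hP 1) h i h1le hi hi2]
    have e : ((2*i*(h-i) : ℕ) : ℝ) = 2 * (i:ℝ) * ((h:ℝ) - i) := by
      push_cast [Nat.cast_sub (by omega : i ≤ h)]
      ring
    rw [show (2:ℝ) * (i:ℝ) * ((h:ℝ) - i) / h = ((2*i*(h-i) : ℕ) : ℝ) / ((h:ℕ):ℝ) from by
      rw [e]]
    rw [ENNReal.ofReal_div_of_pos hpos, ENNReal.ofReal_natCast, ENNReal.ofReal_natCast]
  · have hnum : (∫⁻ x in {x | hitTime 0 x < hitTime ((h:ℤ) + 1) x},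
        visitCount (i:ℤ) 0 x ∂(P (h:ℤ)))
        = ∫⁻ y in {x | hitTime (((h+1:ℕ)):ℤ) x < hitTime 0 x},
            visitCount (((h+1-i:ℕ)):ℤ) (((h+1:ℕ)):ℤ) y ∂Q' := by
      rw [hQ'def, setLIntegral_map hmeasE' (measurable_visitCount _ _) (measurable_reflMap c)]
      rw [hpre]
      refine lintegral_congr fun x => ?_
      rw [visitCount_reflMap]
      rw [show c - (((h+1-i:ℕ)):ℤ) = (i:ℤ) from by
        rw [Nat.cast_sub (by omega : i ≤ h+1), hc]; push_cast; ring]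
      rw [show c - (((h+1:ℕ)):ℤ) = 0 from by rw [hc]; push_cast; ring]
    rw [hnum, hden]
    rw [leg_V Q' hmap (h+1) (h+1-i) (by omega) (by omega) (by omega)]
    have e : ((2*i*(h+1-i) : ℕ) : ℝ) = 2 * ((h+1-i:ℕ):ℝ) * (((h+1:ℕ):ℝ) - ((h+1-i:ℕ):ℝ)) := by
      push_cast [Nat.cast_sub (by omega : i ≤ h+1)]
      ring
    have hE1 : ((h:ℝ≥0∞) + 1) = (((h+1:ℕ)):ℝ≥0∞) := by push_cast; ring
    rw [hE1]
    rw [show 2 * ((h+1-i:ℕ):ℝ) * (((h+1:ℕ):ℝ) - ((h+1-i:ℕ):ℝ)) / ((h+1:ℕ):ℝ)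
        = ((2*i*(h+1-i) : ℕ) : ℝ) / ((h+1:ℕ):ℝ) from by rw [e]]
    rw [ENNReal.ofReal_div_of_pos (by positivity), ENNReal.ofReal_natCast,
      ENNReal.ofReal_natCast]
  · rw [leg_K (P 1) (hP 1) h i h1le hi hi2]
    congr 1
    field_simp
    ring
  · have hnum : (∫⁻ x in {x | hitTime 0 x < hitTime ((h:ℤ) + 1) x},
        crossCount (i:ℤ) 0 x ∂(P (h:ℤ)))
        = ∫⁻ y in {x | hitTime (((h+1:ℕ)):ℤ) x < hitTime 0 x},
            crossCount (((h-i:ℕ)):ℤ) (((h+1:ℕ)):ℤ) y ∂Q' := by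
      rw [hQ'def, setLIntegral_map hmeasE' (measurable_crossCount _ _) (measurable_reflMap c)]
      rw [hpre]
      refine lintegral_congr fun x => ?_
      rw [crossCount_reflMap]
      rw [show c - (((h-i:ℕ)):ℤ) - 1 = (i:ℤ) from by
        rw [Nat.cast_sub (by omega : i ≤ h), hc]; push_cast; ring]
      rw [show c - (((h+1:ℕ)):ℤ) = 0 from by rw [hc]; push_cast; ring]
    rw [hnum, hden]
    rw [leg_K Q' hmap (h+1) (h-i) (by omega) (by omega) (by omega)]
    congr 1
    have e1 : ((h-i:ℕ):ℝ) = (h:ℝ) - (i:ℝ) := by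
      rw [Nat.cast_sub (by omega : i ≤ h)]
    have e2 : ((h+1:ℕ):ℝ) = (h:ℝ) + 1 := by push_cast; ring
    rw [e1, e2]
    have hpos1 : (h:ℝ) + 1 ≠ 0 := by positivity
    field_simp
    ring
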